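/- For all signs θ₁, θ₂ ∈ {−1, +1} and all ξ, η ∈ ℝ⁴ with η ≠ 0, the η-gradient of the phase p_Θ(ξ, η) = θ₀⟨ξ⟩ − θ₁⟨ξ−η⟩ + θ₂|η|, namely ∇_η p_Θ(ξ, η) = θ₁ (ξ−η)/⟨ξ−η⟩ + θ₂ η/|η|, satisfies the space non-resonance lower bound ‖θ₁ (ξ−η)/⟨ξ−η⟩ + θ₂ η/|η|‖ ≥ 1 / (2⟨ξ−η⟩²). In particular the space resonant set of p_Θ contains no point with η ≠ 0. -/

import Mathlib

/-- Japanese bracket `⟨x⟩ = √(1 + |x|²)` on `ℝ⁴`. -/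
noncomputable def jb (x : EuclideanSpace ℝ (Fin 4)) : ℝ := Real.sqrt (1 + ‖x‖ ^ 2)

/-- For all signs `θ₁, θ₂ ∈ {−1, +1}` and all `ξ, η ∈ ℝ⁴` with `η ≠ 0`, the η-gradient of
the Dirac phase, `∇_η p_Θ(ξ, η) = θ₁ (ξ−η)/⟨ξ−η⟩ + θ₂ η/|η|`, satisfies the space
non-resonance lower bound `‖θ₁ (ξ−η)/⟨ξ−η⟩ + θ₂ η/|η|‖ ≥ 1 / (2⟨ξ−η⟩²)`. -/
theorem dirac_phase_space_nonresonance_lower_bound (θ₁ θ₂ : ℝ)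
    (h₁ : θ₁ = -1 ∨ θ₁ = 1) (h₂ : θ₂ = -1 ∨ θ₂ = 1)
    (ξ η : EuclideanSpace ℝ (Fin 4)) (hη : η ≠ 0) :
    1 / (2 * (jb (ξ - η)) ^ 2)
      ≤ ‖(θ₁ / jb (ξ - η)) • (ξ - η) + (θ₂ / ‖η‖) • η‖ := by
  set v := ξ - η with hv
  set N : ℝ := ‖v‖ with hN
  have hN0 : 0 ≤ N := norm_nonneg v
  have hJsq : jb v ^ 2 = 1 + N ^ 2 := by
    rw [jb, Real.sq_sqrt (by positivity)]
  have hJpos : 0 < jb v := by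
    rw [jb]; positivity
  have hNJ : N ≤ jb v := by
    nlinarith [hJpos, hJsq]
  have habs1 : |θ₁| = 1 := by rcases h₁ with h | h <;> simp [h]
  have habs2 : |θ₂| = 1 := by rcases h₂ with h | h <;> simp [h]
  have hη0 : (0:ℝ) < ‖η‖ := norm_pos_iff.mpr hη
  have hn1 : ‖(θ₁ / jb v) • v‖ = N / jb v := by
    rw [norm_smul, Real.norm_eq_abs, abs_div, habs1, abs_of_pos hJpos]
    field_simp
    exact hN.symm
  have hn2 : ‖(θ₂ / ‖η‖) • η‖ = 1 := by
    rw [norm_smul, Real.norm_eq_abs, abs_div, habs2, abs_of_pos hη0]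
    field_simp
  have hkey : 1 - N / jb v ≤ ‖(θ₁ / jb v) • v + (θ₂ / ‖η‖) • η‖ := by
    have h := norm_sub_le ((θ₁ / jb v) • v + (θ₂ / ‖η‖) • η) ((θ₁ / jb v) • v)
    have he : (θ₁ / jb v) • v + (θ₂ / ‖η‖) • η - (θ₁ / jb v) • v = (θ₂ / ‖η‖) • η := by
      abel
    rw [he, hn1, hn2] at h
    linarith
  refine le_trans ?_ hkey
  rw [div_le_iff₀ (by positivity)]
  have hd : N / jb v * jb v = N := div_mul_cancel₀ N (ne_of_gt hJpos)
  nlinarith [hJpos, hJsq, hNJ, hd, sq_nonneg (jb v - N), mul_pos hJpos hJpos]
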